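/- If two consecutive k-mers of a string share an occurrence position of their common minimum p-substring (i.e., the minimum p-substring occurrence of the first k-mer is not its prefix p-substring and the minimum p-substring occurrence of the second is not its suffix p-substring), then the two k-mers have equal minimum p-substrings. Consequently, a break between consecutive k-mers can occur only when the first or the last p-substring of the (k+1)-length window spanning both k-mers is the unique minimum p-substring of that window. -/

import Mathlib

def substr {α : Type*} (s : List α) (i len : ℕ) : List α := (s.drop i).take len

def psubs {α : Type*} (s : List α) (p : ℕ) : List (List α) :=
  (List.range (s.length + 1 - p)).map fun i => substr s i p

/-- The lexicographically minimum `p`-substring of `s`. -/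
def minp {α : Type*} [LinearOrder α] (s : List α) (p : ℕ) : List α :=
  ((psubs s p).min?).getD []

lemma substr_take {α : Type*} (w : List α) {k i p : ℕ} (h : i + p ≤ k) :
    substr (w.take k) i p = substr w i p := by
  simp only [substr, List.drop_take, List.take_take]
  rw [Nat.min_eq_left (by omega)]

lemma substr_drop {α : Type*} (w : List α) (j p : ℕ) :
    substr (w.drop 1) j p = substr w (j + 1) p := by
  simp [substr, List.drop_drop, Nat.add_comm]

lemma mem_psubs {α : Type*} {s : List α} {p : ℕ} {x : List α} :
    x ∈ psubs s p ↔ ∃ i, i < s.length + 1 - p ∧ substr s i p = x := by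
  simp [psubs, List.mem_map, List.mem_range]

lemma minp_spec {α : Type*} [LinearOrder α] {s : List α} {p : ℕ} (h : p ≤ s.length) :
    minp s p ∈ psubs s p ∧ ∀ x ∈ psubs s p, minp s p ≤ x := by
  have hne : psubs s p ≠ [] := by
    simp only [psubs, ne_eq, List.map_eq_nil_iff, List.range_eq_nil]
    omega
  obtain ⟨m, hm⟩ : ∃ m, (psubs s p).min? = some m := by
    cases h' : (psubs s p).min? with
    | none => exact absurd (List.min?_eq_none_iff.mp h') hne
    | some m => exact ⟨m, rfl⟩
  have hget : minp s p = m := by rw [minp, hm]; rfl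
  have anti : Std.Antisymm (fun (x1 x2 : List α) => x1 ≤ x2) := ⟨@le_antisymm (List α) _⟩
  rw [List.min?_eq_some_iff] at hm
  rw [hget]
  exact hm

/-- let `w` be the length-(k+1) window spanning two consecutive k-mers
`A = w.take k` and `B = w.drop 1`. If the minimum `p`-substring of `A` occurs at a
position other than its prefix (i.e., at some window position `i ≥ 1` with `i + p ≤ k`)
and the minimum `p`-substring of `B` occurs at a position other than its suffix (some
window position `j ≥ 1` with `j + p ≤ k`), then the two minima are equal. Consequently,
a break (`minp A ≠ minp B`) can occur only when the first or the last `p`-substring of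
the window is the unique minimum `p`-substring of the window. -/
theorem stmt18 {α : Type*} [LinearOrder α] (k p : ℕ) (hp : 0 < p) (hpk : p ≤ k)
    (w : List α) (hw : w.length = k + 1) :
    ((∃ i, 1 ≤ i ∧ i + p ≤ k ∧ substr w i p = minp (w.take k) p) →
     (∃ j, 1 ≤ j ∧ j + p ≤ k ∧ substr w j p = minp (w.drop 1) p) →
     minp (w.take k) p = minp (w.drop 1) p) ∧
    (minp (w.take k) p ≠ minp (w.drop 1) p →
      (∀ j, j + p ≤ k + 1 → j ≠ 0 → substr w 0 p < substr w j p) ∨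
      (∀ j, j + p ≤ k + 1 → j ≠ k + 1 - p → substr w (k + 1 - p) p < substr w j p)) := by
  have hAlen : (w.take k).length = k := by simp [hw]
  have hBlen : (w.drop 1).length = k := by simp [hw]
  obtain ⟨hAmem, hAle⟩ := minp_spec (s := w.take k) (p := p) (by omega)
  obtain ⟨hBmem, hBle⟩ := minp_spec (s := w.drop 1) (p := p) (by omega)
  rw [mem_psubs] at hAmem hBmem
  rw [hAlen] at hAmem
  rw [hBlen] at hBmem
  set MA := minp (w.take k) p with hMA
  set MB := minp (w.drop 1) p with hMB
  obtain ⟨i0, hi0, hi0eq⟩ := hAmem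
  rw [substr_take w (by omega)] at hi0eq
  obtain ⟨j0, hj0, hj0eq⟩ := hBmem
  rw [substr_drop] at hj0eq
  have hAle' : ∀ i, i + p ≤ k → MA ≤ substr w i p := by
    intro i hi
    have := hAle (substr (w.take k) i p) (mem_psubs.mpr ⟨i, by omega, rfl⟩)
    rwa [substr_take w hi] at this
  have hBle' : ∀ j, 1 ≤ j → j + p ≤ k + 1 → MB ≤ substr w j p := by
    intro j hj1 hj2
    have := hBle (substr (w.drop 1) (j - 1) p) (mem_psubs.mpr ⟨j - 1, by omega, rfl⟩)
    rw [substr_drop] at this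
    have h2 : MB ≤ substr w (j - 1 + 1) p := this
    rwa [show j - 1 + 1 = j by omega] at h2
  have part1 : (∃ i, 1 ≤ i ∧ i + p ≤ k ∧ substr w i p = MA) →
      (∃ j, 1 ≤ j ∧ j + p ≤ k ∧ substr w j p = MB) → MA = MB := by
    rintro ⟨i, hi1, hi2, hi3⟩ ⟨j, hj1, hj2, hj3⟩
    have h1 : MB ≤ MA := hi3 ▸ hBle' i hi1 (by omega)
    have h2 : MA ≤ MB := hj3 ▸ hAle' j hj2
    exact le_antisymm h2 h1
  refine ⟨part1, ?_⟩
  intro hne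
  by_cases hP : ∃ i, 1 ≤ i ∧ i + p ≤ k ∧ substr w i p = MA
  · -- then ¬Q must hold
    have hQ : ¬ ∃ j, 1 ≤ j ∧ j + p ≤ k ∧ substr w j p = MB := fun hQ => hne (part1 hP hQ)
    push_neg at hQ
    have hj0last : j0 + 1 = k + 1 - p := by
      by_contra hcon
      exact hQ (j0 + 1) (by omega) (by omega) hj0eq
    have hMBlast : MB = substr w (k + 1 - p) p := by rw [← hj0last, hj0eq]
    have hBstrict : ∀ j, 1 ≤ j → j + p ≤ k → MB < substr w j p := fun j h1 h2 =>
      lt_of_le_of_ne (hBle' j h1 (by omega)) (fun h => hQ j h1 h2 h.symm)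
    by_cases hfirst : substr w (k + 1 - p) p < substr w 0 p
    · right
      intro j hj hjne
      have hj' : j + p ≤ k := by omega
      rw [← hMBlast]
      rcases Nat.eq_zero_or_pos j with rfl | hjpos
      · rwa [hMBlast]
      · exact hBstrict j hjpos hj'
    · push_neg at hfirst
      rw [← hMBlast] at hfirst
      have hMAle : MA ≤ MB := le_trans (hAle' 0 (by omega)) hfirst
      have hMAlt : MA < MB := lt_of_le_of_ne hMAle hne
      have hi00 : i0 = 0 := by
        by_contra hcon
        have h3 := hBstrict i0 (by omega) (by omega)
        rw [hi0eq] at h3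
        exact absurd (lt_trans hMAlt h3) (lt_irrefl MA)
      rw [hi00] at hi0eq
      left
      intro j hj hjne
      rw [hi0eq]
      rcases Nat.lt_or_ge (j + p) (k + 1) with hj' | hj'
      · exact lt_of_lt_of_le hMAlt (le_of_lt (hBstrict j (by omega) (by omega)))
      · have hjeq : j = k + 1 - p := by omega
        rw [hjeq, ← hMBlast]
        exact hMAlt
  · push_neg at hP
    have hi00 : i0 = 0 := by
      by_contra hcon
      exact hP i0 (by omega) (by omega) hi0eq
    rw [hi00] at hi0eq
    have hAstrict : ∀ i, 1 ≤ i → i + p ≤ k → MA < substr w i p := fun i h1 h2 =>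
      lt_of_le_of_ne (hAle' i h2) (fun h => hP i h1 h2 h.symm)
    by_cases hlast : substr w 0 p < substr w (k + 1 - p) p
    · left
      intro j hj hjne
      rcases Nat.lt_or_ge (j + p) (k + 1) with hj' | hj'
      · rw [hi0eq]
        exact hAstrict j (by omega) (by omega)
      · have hjeq : j = k + 1 - p := by omega
        rw [hjeq]
        exact hlast
    · push_neg at hlast
      have hMBle : MB ≤ MA := by
        have h1 : MB ≤ substr w (k + 1 - p) p := hBle' (k + 1 - p) (by omega) (by omega)
        exact le_trans h1 (le_trans hlast (le_of_eq hi0eq))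
      have hMBlt : MB < MA := lt_of_le_of_ne hMBle (Ne.symm hne)
      have hj0last : j0 + 1 = k + 1 - p := by
        by_contra hcon
        have h3 := hAstrict (j0 + 1) (by omega) (by omega)
        rw [hj0eq] at h3
        exact absurd (lt_trans hMBlt h3) (lt_irrefl MB)
      have hMBlast : MB = substr w (k + 1 - p) p := by rw [← hj0last, hj0eq]
      right
      intro j hj hjne
      rw [← hMBlast]
      rcases Nat.eq_zero_or_pos j with rfl | hjpos
      · rw [hi0eq]
        exact hMBlt
      · exact lt_trans hMBlt (hAstrict j hjpos (by omega))
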